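/- Let $k$ be a field, $S=k[x_0,x_1]$, and for $e\ge 1$, $m\ge 0$ consider the map $\alpha_e: S_e\otimes S_2(S_m)\to S_{m+e}\otimes S_m$ induced by the inclusion of symmetric tensors $S_2(S_m)\subset S_m\otimes S_m$ followed by multiplication $S_e\otimes S_m\to S_{m+e}$ on the first factor. Then $\alpha_e$ is surjective for all $e\ge 1$ and $m\ge 0$. -/

import Mathlib

open MvPolynomial TensorProduct

noncomputable section

variable (k : Type*) [Field k]

/-- degree-`d` binary forms, as a subspace of `S = k[x₀,x₁]`. -/
abbrev binForms (d : ℕ) : Submodule k (MvPolynomial (Fin 2) k) :=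
  MvPolynomial.homogeneousSubmodule (Fin 2) k d

/-- the flip on `S ⊗ S`. -/
def flipMap : MvPolynomial (Fin 2) k ⊗[k] MvPolynomial (Fin 2) k →ₗ[k]
    MvPolynomial (Fin 2) k ⊗[k] MvPolynomial (Fin 2) k :=
  (TensorProduct.comm k _ _).toLinearMap

/-- the subspace `S_2(S_m)` of `S ⊗ S`: tensors in `S_m ⊗ S_m`
which are symmetric (fixed by the flip). -/
def symTensors (m : ℕ) : Submodule k (MvPolynomial (Fin 2) k ⊗[k] MvPolynomial (Fin 2) k) :=
  (Submodule.map₂ (TensorProduct.mk k _ _) (binForms k m) (binForms k m)) ⊓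
    LinearMap.ker (flipMap k - LinearMap.id)

namespace AlphaAux

/-- the monomial `x₀^i x₁^j`. -/
def mon (i j : ℕ) : MvPolynomial (Fin 2) k := X 0 ^ i * X 1 ^ j

lemma mon_mem (i j : ℕ) : mon k i j ∈ binForms k (i + j) := by
  rw [mem_homogeneousSubmodule]
  have := ((isHomogeneous_X k (0 : Fin 2)).pow i).mul ((isHomogeneous_X k (1 : Fin 2)).pow j)
  simpa [mon] using this

lemma mon_mem' (i j d : ℕ) (h : i + j = d) : mon k i j ∈ binForms k d := by
  subst h; exact mon_mem k i j

lemma mon_mul (a b c d : ℕ) : mon k a b * mon k c d = mon k (a + c) (b + d) := by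
  simp only [mon, pow_add]; ring

/-- the span appearing in the statement. -/
def SP (e m : ℕ) : Submodule k (MvPolynomial (Fin 2) k ⊗[k] MvPolynomial (Fin 2) k) :=
  Submodule.span k
    {z : MvPolynomial (Fin 2) k ⊗[k] MvPolynomial (Fin 2) k |
      ∃ g ∈ binForms k e, ∃ t ∈ symTensors k m,
        z = LinearMap.rTensor _ (LinearMap.mulLeft k g) t}

variable {k}

lemma diag_mem {e m : ℕ} {b d : ℕ} (hb : b ≤ m) (hd : d ≤ e) :
    mon k (b + d) (m + e - (b + d)) ⊗ₜ[k] mon k b (m - b) ∈ SP k e m := by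
  apply Submodule.subset_span
  refine ⟨mon k d (e - d), mon_mem' k d (e - d) e (by omega),
    mon k b (m - b) ⊗ₜ[k] mon k b (m - b), ⟨?_, ?_⟩, ?_⟩
  · exact Submodule.apply_mem_map₂ _ (mon_mem' k b (m - b) m (by omega))
      (mon_mem' k b (m - b) m (by omega))
  · simp [LinearMap.mem_ker, flipMap, LinearMap.sub_apply, sub_eq_zero]
  · rw [LinearMap.rTensor_tmul, LinearMap.mulLeft_apply, mon_mul]
    rw [show d + b = b + d by omega, show e - d + (m - b) = m + e - (b + d) by omega]

lemma rel_mem {e m : ℕ} {b c d : ℕ} (hb : b ≤ m) (hc : c ≤ m) (hd : d ≤ e) :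
    mon k (c + d) (m + e - (c + d)) ⊗ₜ[k] mon k b (m - b)
      + mon k (b + d) (m + e - (b + d)) ⊗ₜ[k] mon k c (m - c) ∈ SP k e m := by
  apply Submodule.subset_span
  refine ⟨mon k d (e - d), mon_mem' k d (e - d) e (by omega),
    mon k c (m - c) ⊗ₜ[k] mon k b (m - b) + mon k b (m - b) ⊗ₜ[k] mon k c (m - c),
    ⟨?_, ?_⟩, ?_⟩
  · exact Submodule.add_mem _
      (Submodule.apply_mem_map₂ _ (mon_mem' k c (m - c) m (by omega))
        (mon_mem' k b (m - b) m (by omega)))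
      (Submodule.apply_mem_map₂ _ (mon_mem' k b (m - b) m (by omega))
        (mon_mem' k c (m - c) m (by omega)))
  · rw [SetLike.mem_coe, LinearMap.mem_ker, LinearMap.sub_apply, LinearMap.id_apply, sub_eq_zero]
    simp only [flipMap, LinearEquiv.coe_coe, map_add, comm_tmul]
    rw [add_comm]
  · rw [map_add, LinearMap.rTensor_tmul, LinearMap.rTensor_tmul, LinearMap.mulLeft_apply,
      LinearMap.mulLeft_apply, mon_mul, mon_mul]
    rw [show d + c = c + d by omega, show e - d + (m - c) = m + e - (c + d) by omega,
      show d + b = b + d by omega, show e - d + (m - b) = m + e - (b + d) by omega]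

lemma main {e m : ℕ} (he : 1 ≤ e) :
    ∀ n a b, a ≤ m + e → b ≤ m → (a - b) + (b - a) ≤ n →
      mon k a (m + e - a) ⊗ₜ[k] mon k b (m - b) ∈ SP k e m := by
  intro n
  induction n using Nat.strong_induction_on with
  | _ n IH =>
    intro a b ha hb hn
    rcases le_or_gt b a with hba | hab
    · rcases le_or_gt a (b + e) with h1 | h1
      · -- direct, diagonal case
        have := diag_mem (k := k) (e := e) (m := m) (b := b) (d := a - b) hb (by omega)
        rwa [show b + (a - b) = a by omega] at this
      · -- a > b + e : reduce
        have hrel := rel_mem (k := k) (e := e) (m := m) (b := b) (c := a - e) (d := e)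
          hb (by omega) le_rfl
        rw [show a - e + e = a by omega] at hrel
        have hpart : mon k (b + e) (m + e - (b + e)) ⊗ₜ[k] mon k (a - e) (m - (a - e))
            ∈ SP k e m := by
          refine IH ((a - b) + (b - a) - 1) (by omega) (b + e) (a - e) (by omega) (by omega)
            (by omega)
        have := Submodule.sub_mem _ hrel hpart
        simpa using this
    · -- a < b : swap first
      have hrel1 := rel_mem (k := k) (e := e) (m := m) (b := b) (c := a) (d := 0)
        hb (by omega) (by omega)
      rw [Nat.add_zero, Nat.add_zero] at hrel1
      -- hrel1 : mon a ⊗ mon b + mon b ⊗ mon a ∈ SP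
      have hswap : mon k b (m + e - b) ⊗ₜ[k] mon k a (m - a) ∈ SP k e m := by
        rcases le_or_gt b (a + e) with h1 | h1
        · have := diag_mem (k := k) (e := e) (m := m) (b := a) (d := b - a)
            (by omega) (by omega)
          rwa [show a + (b - a) = b by omega] at this
        · have hrel2 := rel_mem (k := k) (e := e) (m := m) (b := a) (c := b - e) (d := e)
            (by omega) (by omega) le_rfl
          rw [show b - e + e = b by omega] at hrel2
          have hpart : mon k (a + e) (m + e - (a + e)) ⊗ₜ[k] mon k (b - e) (m - (b - e))
              ∈ SP k e m := by
            refine IH ((a - b) + (b - a) - 1) (by omega) (a + e) (b - e) (by omega) (by omega)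
              (by omega)
          have := Submodule.sub_mem _ hrel2 hpart
          simpa using this
      have := Submodule.sub_mem _ hrel1 hswap
      simpa using this

lemma monomial_eq_smul_mon (s : Fin 2 →₀ ℕ) (r : k) :
    (monomial s r : MvPolynomial (Fin 2) k) = r • mon k (s 0) (s 1) := by
  rw [monomial_eq, Finsupp.prod_pow, Fin.prod_univ_two, mon]
  rw [smul_eq_C_mul]

lemma degree_fin_two (s : Fin 2 →₀ ℕ) : s.degree = s 0 + s 1 := by
  have : s.degree = ∑ i : Fin 2, s i := by
    rw [Finsupp.degree]
    exact Finset.sum_subset (Finset.subset_univ _)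
      (fun x _ hx => Finsupp.notMem_support_iff.mp hx)
  rw [this, Fin.sum_univ_two]

lemma mem_span_of_homog {e m : ℕ} (he : 1 ≤ e) (p q : MvPolynomial (Fin 2) k)
    (hp : p ∈ binForms k (m + e)) (hq : q ∈ binForms k m) :
    p ⊗ₜ[k] q ∈ SP k e m := by
  have hp' : p = ∑ s ∈ p.support, monomial s (coeff s p) := (support_sum_monomial_coeff p).symm
  have hq' : q = ∑ s ∈ q.support, monomial s (coeff s q) := (support_sum_monomial_coeff q).symm
  rw [hp', hq', sum_tmul]
  refine Submodule.sum_mem _ fun s hs => ?_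
  rw [tmul_sum]
  refine Submodule.sum_mem _ fun t ht => ?_
  have hsd : s 0 + s 1 = m + e := by
    have := (mem_homogeneousSubmodule _ _).mp hp (mem_support_iff.mp hs)
    rw [← degree_fin_two]
    rw [Finsupp.degree_eq_weight_one]
    exact this
  have htd : t 0 + t 1 = m := by
    have := (mem_homogeneousSubmodule _ _).mp hq (mem_support_iff.mp ht)
    rw [← degree_fin_two]
    rw [Finsupp.degree_eq_weight_one]
    exact this
  rw [monomial_eq_smul_mon, monomial_eq_smul_mon, ← smul_tmul', tmul_smul]
  refine Submodule.smul_mem _ _ (Submodule.smul_mem _ _ ?_)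
  have := main (k := k) (e := e) (m := m) he ((s 0 - t 0) + (t 0 - s 0)) (s 0) (t 0)
    (by omega) (by omega) le_rfl
  rwa [show m + e - s 0 = s 1 by omega, show m - t 0 = t 1 by omega] at this

end AlphaAux

/-- the map `α_e : S_e ⊗ S_2(S_m) → S_{m+e} ⊗ S_m`,
`g ⊗ t ↦ (multiplication by g on the first factor applied to t)`, is surjective
for all `e ≥ 1`, `m ≥ 0`; i.e. the span of the images of all `g ⊗ t` with
`g ∈ S_e` and `t` a symmetric tensor in `S_m ⊗ S_m` is all of `S_{m+e} ⊗ S_m`. -/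
theorem alpha_e_surjective (e m : ℕ) (he : 1 ≤ e) :
    Submodule.span k
        {z : MvPolynomial (Fin 2) k ⊗[k] MvPolynomial (Fin 2) k |
          ∃ g ∈ binForms k e, ∃ t ∈ symTensors k m,
            z = LinearMap.rTensor _ (LinearMap.mulLeft k g) t} =
      Submodule.map₂ (TensorProduct.mk k _ _) (binForms k (m + e)) (binForms k m) := by
  apply le_antisymm
  · rw [Submodule.span_le]
    rintro z ⟨g, hg, t, ht, rfl⟩
    rw [symTensors, Submodule.mem_inf] at ht
    obtain ⟨ht1, -⟩ := ht
    have : Submodule.map (LinearMap.rTensor (MvPolynomial (Fin 2) k) (LinearMap.mulLeft k g))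
        (Submodule.map₂ (TensorProduct.mk k _ _) (binForms k m) (binForms k m)) ≤
        Submodule.map₂ (TensorProduct.mk k _ _) (binForms k (m + e)) (binForms k m) := by
      rw [Submodule.map_le_iff_le_comap]
      rw [Submodule.map₂_le]
      intro a ha b hb
      simp only [Submodule.mem_comap, TensorProduct.mk_apply, LinearMap.rTensor_tmul,
        LinearMap.mulLeft_apply]
      have hga : (g * a).IsHomogeneous (m + e) := by
        have := ((mem_homogeneousSubmodule _ _).mp hg).mul ((mem_homogeneousSubmodule _ _).mp ha)
        rwa [Nat.add_comm] at this
      exact Submodule.apply_mem_map₂ _ ((mem_homogeneousSubmodule _ _).mpr hga) hb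
    exact SetLike.mem_coe.mpr (this (Submodule.mem_map_of_mem ht1))
  · rw [Submodule.map₂_le]
    intro p hp q hq
    exact AlphaAux.mem_span_of_homog he p q hp hq
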